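/- Let $m$ be a positive integer, $K^* \in \mathbb{R}^{m\times m}$ an arbitrary matrix, $O \in \mathbb{R}^{m\times m}$ orthogonal, $L \in \mathbb{R}^{m\times m}$ real diagonal, and $K_U \in \mathbb{R}^{m\times m}$ a diagonal matrix. Define $X := O^\top \exp(L) O$, $B_1 := \exp(L) - O K^* O^\top$, and $U := -K_U \exp(-L)\, \mathrm{diag}(B_1)$, where $\mathrm{diag}(B)$ denotes the diagonal matrix with entries $\mathrm{diag}(B)_{ii} = B_{ii}$ and zero off-diagonal. Then $\mathrm{tr}\big((K^* - X)^\top O^\top \exp(L)\, U\, O\big) = \sum_{i=1}^m (K_U)_{ii} (B_1)_{ii}^2$. In particular, if $K_U$ has nonnegative diagonal entries, this trace is nonnegative. -/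

import Mathlib

open Matrix

/-- the diagonal-control trace identity used in the Lyapunov
analysis of Lemma 3. -/
theorem stmt_11 (m : ℕ) (hm : 0 < m)
    (Kstar : Matrix (Fin m) (Fin m) ℝ)
    (O : Matrix (Fin m) (Fin m) ℝ) (hO : O * Oᵀ = 1)
    (L : Matrix (Fin m) (Fin m) ℝ) (hL : L.IsDiag)
    (KU : Matrix (Fin m) (Fin m) ℝ) (hKU : KU.IsDiag)
    (X : Matrix (Fin m) (Fin m) ℝ) (hX : X = Oᵀ * NormedSpace.exp L * O)
    (B1 : Matrix (Fin m) (Fin m) ℝ) (hB1 : B1 = NormedSpace.exp L - O * Kstar * Oᵀ)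
    (U : Matrix (Fin m) (Fin m) ℝ)
    (hU : U = -(KU * NormedSpace.exp (-L) * Matrix.diagonal B1.diag)) :
    ((Kstar - X)ᵀ * (Oᵀ * NormedSpace.exp L * U * O)).trace =
        ∑ i, KU i i * (B1 i i) ^ 2 ∧
      ((∀ i, 0 ≤ KU i i) →
        0 ≤ ((Kstar - X)ᵀ * (Oᵀ * NormedSpace.exp L * U * O)).trace) := by
  have hO' : Oᵀ * O = 1 := mul_eq_one_comm.mp hO
  have hLd : L = Matrix.diagonal L.diag := hL.diagonal_diag.symm
  have hKUd : KU = Matrix.diagonal KU.diag := hKU.diagonal_diag.symm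
  set d : Fin m → ℝ := L.diag with hd
  have hE : NormedSpace.exp L = Matrix.diagonal (fun i => Real.exp (d i)) := by
    rw [hLd, Matrix.exp_diagonal, Pi.exp_def]
    simp [Real.exp_eq_exp_ℝ]
  have hnegL : -L = Matrix.diagonal (fun i => -(d i)) := by
    rw [hLd]; ext i j; by_cases h : i = j <;> simp [Matrix.diagonal_apply, h]
  have hE' : NormedSpace.exp (-L) = Matrix.diagonal (fun i => Real.exp (-(d i))) := by
    rw [hnegL, Matrix.exp_diagonal, Pi.exp_def]
    simp [Real.exp_eq_exp_ℝ]
  have hEt : (NormedSpace.exp L)ᵀ = NormedSpace.exp L := by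
    rw [hE, Matrix.diagonal_transpose]
  -- sandwich: E * KU * E⁻¹ = KU
  have hsand : NormedSpace.exp L * KU * NormedSpace.exp (-L) = KU := by
    rw [hE, hE', hKUd, Matrix.diagonal_mul_diagonal, Matrix.diagonal_mul_diagonal]
    refine congrArg Matrix.diagonal (funext fun i => ?_)
    rw [mul_comm (Real.exp (d i)) (KU.diag i), mul_assoc, ← Real.exp_add]
    simp

  -- key conjugation identity
  have hc1 : ∀ M : Matrix (Fin m) (Fin m) ℝ, O * (Oᵀ * M) = M := fun M => by
    rw [← Matrix.mul_assoc, hO, Matrix.one_mul]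
  have hX' : O * Xᵀ * Oᵀ = NormedSpace.exp L := by
    rw [hX]
    simp only [Matrix.transpose_mul, Matrix.transpose_transpose, hEt, Matrix.mul_assoc, hc1, hO,
      Matrix.mul_one]
  have hkey : O * (Kstar - X)ᵀ * Oᵀ = -B1ᵀ := by
    rw [Matrix.transpose_sub, Matrix.mul_sub, Matrix.sub_mul, hX', hB1]
    simp only [Matrix.transpose_sub, Matrix.transpose_mul, Matrix.transpose_transpose, hEt,
      neg_sub, Matrix.mul_assoc]
  -- E * U = -(KU * diagonal B1.diag)
  have hEU : NormedSpace.exp L * U = -(KU * Matrix.diagonal B1.diag) := by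
    rw [hU, Matrix.mul_neg]
    congr 1
    rw [← Matrix.mul_assoc, ← Matrix.mul_assoc, hsand]
  set C : Matrix (Fin m) (Fin m) ℝ := KU * Matrix.diagonal B1.diag with hC
  have hM : Oᵀ * NormedSpace.exp L * U * O = -(Oᵀ * C * O) := by
    rw [Matrix.mul_assoc Oᵀ, hEU]
    simp [Matrix.mul_assoc]
  have htr : ((Kstar - X)ᵀ * (Oᵀ * NormedSpace.exp L * U * O)).trace
      = ∑ i, KU i i * (B1 i i) ^ 2 := by
    rw [hM, Matrix.mul_neg, Matrix.trace_neg]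
    have h1 : ((Kstar - X)ᵀ * (Oᵀ * C * O)).trace
        = (C * (O * (Kstar - X)ᵀ * Oᵀ)).trace := by
      rw [Matrix.trace_mul_comm]
      rw [show Oᵀ * C * O * (Kstar - X)ᵀ = Oᵀ * (C * (O * (Kstar - X)ᵀ)) from by
        simp only [Matrix.mul_assoc]]
      rw [Matrix.trace_mul_comm]
      simp only [Matrix.mul_assoc]
    rw [h1, hkey, Matrix.mul_neg, Matrix.trace_neg, neg_neg]
    -- now trace (C * B1ᵀ) with C = KU * diagonal B1.diag
    rw [hC, hKUd, Matrix.diagonal_mul_diagonal]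
    simp only [Matrix.trace, Matrix.diag_apply, Matrix.mul_apply, Matrix.diagonal_apply,
      Matrix.transpose_apply, ite_mul, zero_mul]
    refine Finset.sum_congr rfl fun i _ => ?_
    simp [Finset.sum_ite_eq, Matrix.diag_apply, sq, mul_assoc]
  refine ⟨htr, fun hpos => ?_⟩
  rw [htr]
  exact Finset.sum_nonneg fun i _ => mul_nonneg (hpos i) (sq_nonneg _)
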